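/- For a simple symmetric random walk on ℤ started at 0 and a positive integer x, the expected number of visits to x−1 strictly before the first visit to x equals 2. -/

import Mathlib

open Finset

namespace SRW

variable (x : ℤ)

/-- number of ±1 paths of length `t` from 0 ending at `y` avoiding `x` at all times. -/
def cnt : ℕ → ℤ → ℕ
  | 0, y => if y = 0 then 1 else 0
  | t+1, y => if y = x then 0 else cnt t (y-1) + cnt t (y+1)

/-- `B t j = C(t, j/2)` if `j` is even nonnegative, else 0. -/
def B (t : ℕ) (j : ℤ) : ℕ := if 2 ∣ j ∧ 0 ≤ j then t.choose (j/2).toNat else 0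

lemma B_pascal (t : ℕ) (j : ℤ) : B (t+1) j = B t (j-2) + B t j := by
  unfold B
  by_cases h2 : 2 ∣ j
  · by_cases h0 : 0 ≤ j
    · rcases eq_or_lt_of_le h0 with h|h
      · simp only [← h]
        norm_num
      · have h2' : 2 ∣ j - 2 := (dvd_sub_right h2).mpr (by norm_num)
        have h0' : 0 ≤ j - 2 := by omega
        rw [if_pos ⟨h2, h0⟩, if_pos ⟨h2', h0'⟩, if_pos ⟨h2, h0⟩]
        obtain ⟨k, rfl⟩ := h2
        have hk : 1 ≤ k := by omega
        have e1 : ((2*k)/2 : ℤ).toNat = k.toNat := by omega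
        have e2 : ((2*k-2)/2 : ℤ).toNat = k.toNat - 1 := by omega
        rw [e1, e2]
        have hk1 : k.toNat = (k.toNat - 1) + 1 := by omega
        rw [hk1, Nat.choose_succ_succ']
        simp
    · have : ¬ (0 ≤ j - 2) := by omega
      simp [h0, this]
      intro _ _; omega
  · have : ¬ (2 ∣ j - 2) := fun h => h2 (by omega)
    simp [h2, this]


variable {x}

lemma B_zero (j : ℤ) : B 0 j = if j = 0 then 1 else 0 := by
  by_cases hj : j = 0
  · subst hj; simp [B]
  · rw [if_neg hj]
    unfold B
    by_cases h : 2 ∣ j ∧ 0 ≤ j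
    · rw [if_pos h]
      obtain ⟨h2, h0⟩ := h
      exact Nat.choose_eq_zero_of_lt (by omega)
    · rw [if_neg h]

lemma cnt_self (hx : 0 < x) : ∀ t, cnt x t x = 0
  | 0 => by simp [cnt, hx.ne']
  | t+1 => by simp [cnt]

lemma cnt_gt (hx : 0 < x) (t : ℕ) : ∀ y, x < y → cnt x t y = 0 := by
  induction t with
  | zero => intro y hy; simp only [cnt]; rw [if_neg (by omega)]
  | succ t ih =>
    intro y hy
    rw [cnt, if_neg (by omega)]
    rcases eq_or_lt_of_le (by omega : x ≤ y - 1) with h|h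
    · rw [← h, cnt_self hx, ih (y+1) (by omega)]
    · rw [ih _ h, ih (y+1) (by omega)]

lemma cnt_eq_B (hx : 0 < x) (t : ℕ) :
    ∀ y ≤ x, (cnt x t y : ℤ) = B t (t + y) - B t (t + 2*x - y) := by
  induction t with
  | zero =>
    intro y hy
    simp only [cnt, B_zero, Nat.cast_zero, zero_add]
    split_ifs <;> push_cast <;> omega
  | succ t ih =>
    intro y hy
    rcases eq_or_lt_of_le hy with h|h
    · rw [h, cnt_self hx]
      have e : (t:ℤ) + 1 + 2*x - x = (t:ℤ) + 1 + x := by ring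
      push_cast
      rw [e]
      simp
    · rw [cnt, if_neg (by omega)]
      push_cast
      rw [ih (y-1) (by omega), ih (y+1) (by omega)]
      rw [B_pascal, B_pascal]
      have e1 : (t:ℤ) + 1 + y - 2 = t + (y-1) := by ring
      have e2 : (t:ℤ) + 1 + y = t + (y+1) := by ring
      have e3 : (t:ℤ) + 1 + 2*x - y - 2 = t + 2*x - (y+1) := by ring
      have e4 : (t:ℤ) + 1 + 2*x - y = t + 2*x - (y-1) := by ring
      push_cast
      rw [e1, e2, e3, e4]
      push_cast
      ring

lemma cnt_zero_of_abs (t : ℕ) : ∀ y : ℤ, (t:ℤ) < |y| → cnt x t y = 0 := by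
  induction t with
  | zero =>
    intro y hy
    simp only [cnt]
    rw [if_neg]
    intro h
    rw [h] at hy
    simp at hy
  | succ t ih =>
    intro y hy
    rw [cnt]
    by_cases h : y = x
    · rw [if_pos h]
    · have a1 : |y| - 1 ≤ |y - 1| := by
        have := abs_sub_abs_le_abs_sub y (1:ℤ); simpa using this
      have a2 : |y| - 1 ≤ |y + 1| := by
        have := abs_sub_abs_le_abs_sub y (-1:ℤ); simpa [sub_neg_eq_add] using this
      push_cast at hy
      rw [if_neg h, ih (y-1) (by omega), ih (y+1) (by omega)]

/-- total number of surviving paths of length `n`. -/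
noncomputable def T (x : ℤ) (n : ℕ) : ℕ := ∑ y ∈ Finset.Icc (-(n:ℤ)) n, cnt x n y

lemma sum_shift {M : Type*} [AddCommMonoid M] (g : ℤ → M) (a b c : ℤ) :
    ∑ y ∈ Finset.Icc a b, g (y + c) = ∑ z ∈ Finset.Icc (a+c) (b+c), g z :=
  Finset.sum_nbij' (fun y => y + c) (fun z => z - c)
    (by intro a ha; simp only [Finset.mem_Icc] at *; omega)
    (by intro a ha; simp only [Finset.mem_Icc] at *; omega)
    (by intro a ha; ring) (by intro a ha; ring) (by intro a ha; rfl)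

lemma T_zero : T x 0 = 1 := by simp [T, cnt]

lemma T_succ (hx : 0 < x) (n : ℕ) : T x (n+1) + cnt x n (x-1) = 2 * T x n := by
  classical
  have key : ∀ y : ℤ, cnt x (n+1) y + (if y = x then cnt x n (y-1) + cnt x n (y+1) else 0)
      = cnt x n (y-1) + cnt x n (y+1) := by
    intro y
    rw [cnt]
    by_cases h : y = x <;> simp [h]
  have hsum : T x (n+1) + (if x ∈ Finset.Icc (-(n:ℤ)-1) (n+1) then
      cnt x n (x-1) + cnt x n (x+1) else 0)
      = ∑ y ∈ Finset.Icc (-(n:ℤ)-1) (n+1), (cnt x n (y-1) + cnt x n (y+1)) := by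
    rw [T]
    have hI : Finset.Icc (-(((n+1:ℕ)):ℤ)) (((n+1:ℕ)):ℤ) = Finset.Icc (-(n:ℤ)-1) ((n:ℤ)+1) := by
      congr 1 <;> push_cast <;> ring
    rw [hI, ← Finset.sum_ite_eq' (Finset.Icc (-(n:ℤ)-1) ((n:ℤ)+1)) x
      (fun y => cnt x n (y-1) + cnt x n (y+1)), ← Finset.sum_add_distrib]
    exact Finset.sum_congr rfl fun y _ => key y
  have hsplit : ∑ y ∈ Finset.Icc (-(n:ℤ)-1) (n+1), (cnt x n (y-1) + cnt x n (y+1))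
      = 2 * T x n := by
    rw [Finset.sum_add_distrib]
    have h1 : ∑ y ∈ Finset.Icc (-(n:ℤ)-1) (n+1), cnt x n (y-1) = T x n := by
      have := sum_shift (cnt x n) (-(n:ℤ)-1) (n+1) (-1)
      simp only [sub_eq_add_neg] at *
      rw [this]
      refine (Finset.sum_subset ?_ ?_).symm
      · intro y hy; simp only [Finset.mem_Icc] at *; omega
      · intro y hy hny
        simp only [Finset.mem_Icc] at hy hny
        have hne : |y| = -y := abs_of_neg (by omega)
        exact cnt_zero_of_abs n y (by omega)
    have h2 : ∑ y ∈ Finset.Icc (-(n:ℤ)-1) (n+1), cnt x n (y+1) = T x n := by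
      rw [sum_shift (cnt x n) (-(n:ℤ)-1) (n+1) 1]
      refine (Finset.sum_subset ?_ ?_).symm
      · intro y hy; simp only [Finset.mem_Icc] at *; omega
      · intro y hy hny
        simp only [Finset.mem_Icc] at hy hny
        have hne : |y| = y := abs_of_nonneg (by omega)
        exact cnt_zero_of_abs n y (by omega)
    rw [h1, h2]; ring
  rw [hsplit] at hsum
  rw [← hsum]
  have hx1 : cnt x n (x+1) = 0 := cnt_gt hx n (x+1) (by omega)
  by_cases hmem : x ∈ Finset.Icc (-(n:ℤ)-1) (n+1)
  · rw [if_pos hmem, hx1]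
    simp
  · rw [if_neg hmem]
    have : cnt x n (x-1) = 0 := by
      refine cnt_zero_of_abs n (x-1) ?_
      simp only [Finset.mem_Icc] at hmem
      have : |x - 1| = x - 1 := abs_of_nonneg (by omega)
      omega
    rw [this]

lemma B_symm (n : ℕ) (z : ℤ) : B n ((n:ℤ) + z) = B n ((n:ℤ) - z) := by
  unfold B
  by_cases h1 : 2 ∣ (n:ℤ) + z ∧ 0 ≤ (n:ℤ) + z
  · obtain ⟨hd, h0⟩ := h1
    have hd' : 2 ∣ (n:ℤ) - z := by omega
    by_cases h0' : 0 ≤ (n:ℤ) - z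
    · rw [if_pos ⟨hd, h0⟩, if_pos ⟨hd', h0'⟩]
      have hb : (((n:ℤ)-z)/2).toNat ≤ n := by omega
      rw [← Nat.choose_symm hb]
      congr 1
      omega
    · rw [if_pos ⟨hd, h0⟩, if_neg (by tauto)]
      exact Nat.choose_eq_zero_of_lt (by omega)
  · by_cases h2 : 2 ∣ (n:ℤ) - z ∧ 0 ≤ (n:ℤ) - z
    · rw [if_neg h1, if_pos h2]
      obtain ⟨hd, h0⟩ := h2
      have hnd : 2 ∣ (n:ℤ) + z := by omega
      have : ¬ 0 ≤ (n:ℤ) + z := fun h => h1 ⟨hnd, h⟩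
      exact (Nat.choose_eq_zero_of_lt (by omega)).symm
    · rw [if_neg h1, if_neg h2]

lemma B_le (n : ℕ) (j : ℤ) : B n j ≤ n.choose (n/2) := by
  unfold B
  split_ifs
  · exact Nat.choose_le_middle _ _
  · exact Nat.zero_le _

lemma B_neg (n : ℕ) {j : ℤ} (h : j < 0) : B n j = 0 := by
  unfold B
  rw [if_neg (by omega)]

lemma T_le_sum (hx : 0 < x) (n : ℕ) :
    (T x n : ℤ) ≤ ∑ y ∈ Finset.Icc (-x+1) x, (B n ((n:ℤ) + y) : ℤ) := by
  classical
  have e0 : (T x n : ℤ) = ∑ y ∈ Finset.Icc (-(n:ℤ)) n, (cnt x n y : ℤ) := by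
    rw [T]; push_cast; rfl
  -- enlarge to K
  set K := Finset.Icc (-(n:ℤ)-2*x) ((n:ℤ)+2*x) with hK
  have e1 : ∑ y ∈ Finset.Icc (-(n:ℤ)) n, (cnt x n y : ℤ) = ∑ y ∈ K, (cnt x n y : ℤ) := by
    refine Finset.sum_subset ?_ ?_
    · intro y hy; simp only [Finset.mem_Icc, hK] at *; omega
    · intro y hy hny
      simp only [Finset.mem_Icc, hK] at hy hny
      rcases le_or_gt y 0 with h|h
      · have : |y| = -y := by rw [abs_of_nonpos h]
        rw [cnt_zero_of_abs n y (by omega)]; rfl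
      · have : |y| = y := abs_of_pos h
        rw [cnt_zero_of_abs n y (by omega)]; rfl
  set J := Finset.Icc (-(n:ℤ)-2*x) x with hJ
  have e2 : ∑ y ∈ K, (cnt x n y : ℤ) = ∑ y ∈ J, (cnt x n y : ℤ) := by
    refine (Finset.sum_subset ?_ ?_).symm
    · intro y hy; simp only [Finset.mem_Icc, hK, hJ] at *; omega
    · intro y hy hny
      simp only [Finset.mem_Icc, hK, hJ] at hy hny
      rw [cnt_gt hx n y (by omega)]; rfl
  have e3 : ∑ y ∈ J, (cnt x n y : ℤ)
      = ∑ y ∈ J, (B n ((n:ℤ) + y) : ℤ) - ∑ y ∈ J, (B n ((n:ℤ) + (y - 2*x)) : ℤ) := by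
    rw [← Finset.sum_sub_distrib]
    refine Finset.sum_congr rfl fun y hy => ?_
    simp only [Finset.mem_Icc, hJ] at hy
    rw [cnt_eq_B hx n y hy.2]
    congr 2
    · have : (n:ℤ) + 2*x - y = (n:ℤ) - (y - 2*x) := by ring
      rw [this, ← B_symm]
  have e4 : ∑ y ∈ J, (B n ((n:ℤ) + (y - 2*x)) : ℤ)
      = ∑ w ∈ Finset.Icc (-(n:ℤ)-4*x) (-x), (B n ((n:ℤ) + w) : ℤ) := by
    have h := sum_shift (fun w => (B n ((n:ℤ) + w) : ℤ)) (-(n:ℤ)-2*x) x (-(2*x))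
    calc ∑ y ∈ J, (B n ((n:ℤ) + (y - 2*x)) : ℤ)
        = ∑ y ∈ Finset.Icc (-(n:ℤ)-2*x) x, (B n ((n:ℤ) + (y + -(2*x))) : ℤ) := by
          rw [hJ]
          refine Finset.sum_congr (by congr 1 <;> ring) fun y _ => by rw [sub_eq_add_neg]
      _ = ∑ z ∈ Finset.Icc (-(n:ℤ)-2*x + -(2*x)) (x + -(2*x)), (B n ((n:ℤ) + z) : ℤ) := h
      _ = ∑ w ∈ Finset.Icc (-(n:ℤ)-4*x) (-x), (B n ((n:ℤ) + w) : ℤ) := by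
          refine Finset.sum_congr (by congr 1 <;> ring) fun y _ => rfl
  have e5 : ∑ w ∈ Finset.Icc (-(n:ℤ)-2*x) (-x), (B n ((n:ℤ) + w) : ℤ)
      ≤ ∑ w ∈ Finset.Icc (-(n:ℤ)-4*x) (-x), (B n ((n:ℤ) + w) : ℤ) := by
    refine Finset.sum_le_sum_of_subset_of_nonneg ?_ ?_
    · intro y hy; simp only [Finset.mem_Icc] at *; omega
    · intro y _ _; positivity
  have e6 : ∑ y ∈ J, (B n ((n:ℤ) + y) : ℤ)
      = ∑ y ∈ Finset.Icc (-(n:ℤ)-2*x) (-x), (B n ((n:ℤ) + y) : ℤ)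
        + ∑ y ∈ Finset.Icc (-x+1) x, (B n ((n:ℤ) + y) : ℤ) := by
    rw [← Finset.sum_union]
    · congr 1
      ext y
      simp only [Finset.mem_union, Finset.mem_Icc, hJ]
      omega
    · rw [Finset.disjoint_left]
      intro y hy hy2
      simp only [Finset.mem_Icc] at hy hy2
      omega
  rw [e0, e1, e2, e3, e4, e6]
  have := e5
  omega

lemma T_zero_again : True := trivial

lemma partial_sum (hx : 0 < x) (n : ℕ) :
    ∑ t ∈ Finset.range n, (cnt x t (x-1) : ℝ)/2^t + 2 * (T x n : ℝ) / 2^n = 2 := by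
  induction n with
  | zero => simp [T_zero]
  | succ n ih =>
    rw [Finset.sum_range_succ]
    have hT : (T x (n+1) : ℝ) + (cnt x n (x-1) : ℝ) = 2 * (T x n : ℝ) := by
      exact_mod_cast T_succ hx n
    have hp : (0:ℝ) < 2^n := by positivity
    have key : (cnt x n (x-1) : ℝ)/2^n + 2 * (T x (n+1) : ℝ)/2^(n+1)
        = 2 * (T x n : ℝ)/2^n := by
      have hT' : (T x (n+1) : ℝ) = 2 * (T x n : ℝ) - (cnt x n (x-1) : ℝ) := by
        linarith
      rw [hT', pow_succ]
      field_simp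
      ring
    linarith [ih, key]

lemma central_sq (m : ℕ) : (m+1) * (Nat.centralBinom m)^2 ≤ 16^m := by
  induction m with
  | zero => simp [Nat.centralBinom]
  | succ m ih =>
    have h := Nat.succ_mul_centralBinom_succ m
    have hpos : 0 < (m+1)^2 := by positivity
    refine Nat.le_of_mul_le_mul_left ?_ hpos
    calc (m+1)^2 * ((m+1+1) * Nat.centralBinom (m+1)^2)
        = (m+2) * ((m+1) * Nat.centralBinom (m+1))^2 := by ring
      _ = (m+2) * (2*(2*m+1) * Nat.centralBinom m)^2 := by rw [h]
      _ = (4*(2*m+1)^2*(m+2)) * Nat.centralBinom m ^2 := by ring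
      _ ≤ (16*(m+1)^3) * Nat.centralBinom m ^2 := by
          refine Nat.mul_le_mul_right _ ?_
          nlinarith
      _ = (16*(m+1)^2) * ((m+1) * Nat.centralBinom m ^2) := by ring
      _ ≤ (16*(m+1)^2) * 16^m := Nat.mul_le_mul_left _ ih
      _ = (m+1)^2 * 16^(m+1) := by ring

lemma choose_half_sq (n : ℕ) : (n+1) * (n.choose (n/2))^2 ≤ 2 * 4^n := by
  obtain ⟨m, rfl|rfl⟩ := Nat.even_or_odd' n
  · have hd : (2*m)/2 = m := by omega
    rw [hd]
    have : (2*m).choose m = Nat.centralBinom m := rfl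
    rw [this]
    have h16 : (4:ℕ)^(2*m) = 16^m := by
      rw [pow_mul]; norm_num
    rw [h16]
    calc (2*m+1) * Nat.centralBinom m ^2 ≤ (2*(m+1)) * Nat.centralBinom m ^2 :=
          Nat.mul_le_mul_right _ (by omega)
      _ = 2*((m+1) * Nat.centralBinom m ^2) := by ring
      _ ≤ 2 * 16^m := Nat.mul_le_mul_left _ (central_sq m)
  · have hd : (2*m+1)/2 = m := by omega
    rw [hd]
    set c := (2*m+1).choose m with hc
    have hcb : Nat.centralBinom (m+1) = 2 * c := by
      have h1 : Nat.centralBinom (m+1) = (2*m+2).choose (m+1) := by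
        rw [Nat.centralBinom]
        congr 1
      have h2 : (2*m+2).choose (m+1) = (2*m+1).choose m + (2*m+1).choose (m+1) := by
        rw [show 2*m+2 = (2*m+1)+1 from rfl]
        exact Nat.choose_succ_succ _ _
      have h3 : (2*m+1).choose (m+1) = (2*m+1).choose m := by
        have h := Nat.choose_symm (show m+1 ≤ 2*m+1 by omega)
        rw [show (2*m+1)-(m+1) = m from by omega] at h
        exact h.symm
      rw [h1, h2, h3, hc]; ring
    have hcs := central_sq (m+1)
    rw [hcb] at hcs
    -- hcs : (m+2) * (2*c)^2 ≤ 16^(m+1)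
    have h16 : 2 * (2 * (4:ℕ)^(2*m+1)) = 16^(m+1) := by
      have h4 : (4:ℕ)^(2*m+1) = 16^m * 4 := by rw [pow_succ, pow_mul]; norm_num
      rw [h4, pow_succ]; ring
    refine Nat.le_of_mul_le_mul_left ?_ (show 0 < 2 by norm_num)
    calc 2 * ((2*m+1+1) * c^2) = (4*m+4) * c^2 := by ring
      _ ≤ (4*(m+2)) * c^2 := Nat.mul_le_mul_right _ (by omega)
      _ = (m+2) * (2*c)^2 := by ring
      _ ≤ 16^(m+1) := hcs
      _ = 2 * (2 * 4^(2*m+1)) := h16.symm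

open Filter in
lemma tendsto_choose_half :
    Tendsto (fun n : ℕ => (n.choose (n/2) : ℝ)/2^n) atTop (nhds 0) := by
  have hlb : ∀ n : ℕ, (0:ℝ) ≤ (n.choose (n/2):ℝ)/2^n := fun n => by positivity
  have hub : ∀ n : ℕ, ((n.choose (n/2) : ℝ)/2^n) ≤ Real.sqrt (2/((n:ℝ)+1)) := by
    intro n
    have h0 : (0:ℝ) ≤ (n.choose (n/2) : ℝ)/2^n := hlb n
    rw [show (n.choose (n/2) : ℝ)/2^n = Real.sqrt (((n.choose (n/2) : ℝ)/2^n)^2) from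
      (Real.sqrt_sq h0).symm]
    apply Real.sqrt_le_sqrt
    have hc : ((n:ℝ)+1) * ((n.choose (n/2):ℝ))^2 ≤ 2 * 4^n := by
      exact_mod_cast choose_half_sq n
    have h4 : ((2:ℝ)^n)^2 = 4^n := by
      rw [← pow_mul, mul_comm, pow_mul]; norm_num
    rw [div_pow, h4, div_le_div_iff₀ (by positivity) (by positivity)]
    linarith [hc]
  have hs : Tendsto (fun n : ℕ => Real.sqrt (2/((n:ℝ)+1))) atTop (nhds 0) := by
    rw [show (0:ℝ) = Real.sqrt 0 from Real.sqrt_zero.symm]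
    apply (Real.continuous_sqrt.tendsto 0).comp
    have h2 : Tendsto (fun n : ℕ => 2*(1/((n:ℝ)+1))) atTop (nhds (2*0)) :=
      tendsto_one_div_add_atTop_nhds_zero_nat.const_mul 2
    simpa [div_eq_mul_inv] using h2
  exact squeeze_zero hlb hub hs

open Filter in
lemma T_tendsto (hx : 0 < x) :
    Tendsto (fun n : ℕ => 2 * (T x n : ℝ)/2^n) atTop (nhds 0) := by
  have hub : ∀ n : ℕ, 2*(T x n:ℝ)/2^n ≤ (4*(x:ℝ)) * ((n.choose (n/2):ℝ)/2^n) := by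
    intro n
    have h1 : (T x n : ℤ) ≤ 2*x * (n.choose (n/2) : ℤ) := by
      refine le_trans (T_le_sum hx n) ?_
      calc ∑ y ∈ Finset.Icc (-x+1) x, (B n ((n:ℤ)+y) : ℤ)
          ≤ ∑ _y ∈ Finset.Icc (-x+1) x, (n.choose (n/2) : ℤ) := by
            refine Finset.sum_le_sum fun y _ => ?_
            exact_mod_cast B_le n ((n:ℤ)+y)
        _ = (Finset.Icc (-x+1) x).card * (n.choose (n/2):ℤ) := by
            rw [Finset.sum_const, nsmul_eq_mul]
        _ = 2*x * (n.choose (n/2):ℤ) := by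
            rw [Int.card_Icc]
            have h2x : (x + 1 - (-x+1)) = 2*x := by ring
            rw [h2x]
            congr 1
            exact_mod_cast Int.toNat_of_nonneg (by omega)
    have h1' : (T x n : ℝ) ≤ 2*(x:ℝ) * (n.choose (n/2):ℝ) := by exact_mod_cast h1
    have key : 2*(T x n:ℝ) ≤ (4*(x:ℝ)) * (n.choose (n/2):ℝ) := by linarith
    calc 2*(T x n:ℝ)/2^n ≤ ((4*(x:ℝ)) * (n.choose (n/2):ℝ))/2^n := by
          gcongr
      _ = (4*(x:ℝ)) * ((n.choose (n/2):ℝ)/2^n) := by ring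
  have hlb : ∀ n : ℕ, (0:ℝ) ≤ 2*(T x n:ℝ)/2^n := fun n => by positivity
  have hs : Tendsto (fun n : ℕ => (4*(x:ℝ)) * ((n.choose (n/2):ℝ)/2^n)) atTop (nhds 0) := by
    have := tendsto_choose_half.const_mul (4*(x:ℝ))
    simpa using this
  exact squeeze_zero hlb hub hs

lemma main_hasSum (hx : 0 < x) : HasSum (fun t : ℕ => (cnt x t (x-1) : ℝ)/2^t) 2 := by
  rw [hasSum_iff_tendsto_nat_of_nonneg (fun i => by positivity)]
  have hps : (fun n : ℕ => ∑ t ∈ Finset.range n, (cnt x t (x-1) : ℝ)/2^t)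
      = fun n : ℕ => 2 - 2*(T x n:ℝ)/2^n := by
    funext n
    have := partial_sum hx n
    linarith
  rw [hps]
  have h := (tendsto_const_nhds (x := (2:ℝ)) (f := Filter.atTop (α := ℕ))).sub (T_tendsto hx)
  simpa using h

open MeasureTheory ProbabilityTheory
open scoped ENNReal

lemma filter_sum {M : Type*} [AddCommMonoid M] (f : ℕ → M) (t s : ℕ) (hst : s ≤ t) :
    ∑ i ∈ Finset.univ.filter (fun i : Fin t => (i:ℕ) < s), f i = ∑ i ∈ Finset.range s, f i := by
  refine Finset.sum_bij' (fun (a : Fin t) _ => (a : ℕ))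
    (fun j hj => (⟨j, by simp only [Finset.mem_range] at hj; omega⟩ : Fin t))
    ?_ ?_ ?_ ?_ ?_
  · intro a ha
    simp only [Finset.mem_filter, Finset.mem_range] at ha ⊢
    omega
  · intro j hj
    simp only [Finset.mem_range] at hj
    simp only [Finset.mem_filter, Finset.mem_univ, true_and]
    omega
  · intro a ha; rfl
  · intro j hj; rfl
  · intro a ha; rfl

/-- partial sum of a vector `v : Fin t → ℤ`. -/
def psum {t : ℕ} (v : Fin t → ℤ) (s : ℕ) : ℤ :=
  ∑ i ∈ Finset.univ.filter (fun i : Fin t => (i:ℕ) < s), v i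

lemma measurable_psum (t s : ℕ) : Measurable (fun v : Fin t → ℤ => psum v s) :=
  Finset.measurable_sum _ fun i _ => measurable_pi_apply i

lemma measurableSet_A (t : ℕ) (z x : ℤ) :
    MeasurableSet {v : Fin t → ℤ | psum v t = z ∧ ∀ s ≤ t, psum v s ≠ x} := by
  have : {v : Fin t → ℤ | psum v t = z ∧ ∀ s ≤ t, psum v s ≠ x}
      = ((fun v => psum v t) ⁻¹' {z}) ∩ ⋂ (s : ℕ), ⋂ (_ : s ≤ t), ((fun v => psum v s) ⁻¹' {x})ᶜ := by
    ext v
    simp [Set.mem_iInter, Set.mem_setOf_eq]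
  rw [this]
  exact ((measurable_psum t t) (measurableSet_singleton z)).inter
    (MeasurableSet.iInter fun s => MeasurableSet.iInter fun _ =>
      ((measurable_psum t s) (measurableSet_singleton x)).compl)

variable {Ω : Type*} [MeasureSpace Ω] [IsProbabilityMeasure (volume : Measure Ω)]

lemma meas_E
    (X : ℕ → Ω → ℤ) (hmeas : ∀ n, Measurable (X n))
    (hindep : iIndepFun X volume)
    (hup : ∀ n, volume {ω | X n ω = 1} = 1 / 2)
    (hdown : ∀ n, volume {ω | X n ω = -1} = 1 / 2)
    {x : ℤ} (hx : 0 < x) :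
    ∀ (t : ℕ) (y : ℤ),
      volume {ω | (∑ i ∈ Finset.range t, X i ω) = y ∧
        ∀ s ≤ t, (∑ i ∈ Finset.range s, X i ω) ≠ x}
      = (cnt x t y : ℝ≥0∞) * (2:ℝ≥0∞)⁻¹ ^ t := by
  -- measurability of partial sums and events
  have mS : ∀ s : ℕ, Measurable (fun ω => ∑ i ∈ Finset.range s, X i ω) :=
    fun s => Finset.measurable_sum _ fun i _ => hmeas i
  -- the tuple map and its independence from X t
  have indepPhi : ∀ t : ℕ, IndepFun (fun ω (i : Fin t) => X i ω) (X t) volume := by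
    intro t
    have base := hindep.indepFun_finset (Finset.range t) {t}
      (by simp [Finset.disjoint_left]; omega) hmeas
    have mg : Measurable (fun (v : (i : (Finset.range t : Finset ℕ)) → ℤ) (i : Fin t) =>
        v ⟨(i:ℕ), by simpa using i.isLt⟩) :=
      measurable_pi_lambda _ fun i => measurable_pi_apply _
    have mh : Measurable (fun (v : (i : ({t} : Finset ℕ)) → ℤ) =>
        v ⟨t, Finset.mem_singleton_self t⟩) := measurable_pi_apply _
    exact base.comp mg mh
  -- identify the event with a preimage under the tuple map
  have hEv : ∀ (t : ℕ) (z : ℤ),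
      {ω | (∑ i ∈ Finset.range t, X i ω) = z ∧ ∀ s ≤ t, (∑ i ∈ Finset.range s, X i ω) ≠ x}
      = (fun ω (i : Fin t) => X i ω) ⁻¹'
        {v : Fin t → ℤ | psum v t = z ∧ ∀ s ≤ t, psum v s ≠ x} := by
    intro t z
    have hps : ∀ ω, ∀ s ≤ t, psum (fun i : Fin t => X i ω) s = ∑ i ∈ Finset.range s, X i ω := by
      intro ω s hs
      exact filter_sum (fun i => X i ω) t s hs
    ext ω
    simp only [Set.mem_preimage, Set.mem_setOf_eq]
    constructor
    · rintro ⟨h1, h2⟩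
      refine ⟨by rw [hps ω t le_rfl]; exact h1, fun s hs => by rw [hps ω s hs]; exact h2 s hs⟩
    · rintro ⟨h1, h2⟩
      rw [hps ω t le_rfl] at h1
      exact ⟨h1, fun s hs => by have := h2 s hs; rwa [hps ω s hs] at this⟩
  have mE : ∀ (t : ℕ) (z : ℤ), MeasurableSet
      {ω | (∑ i ∈ Finset.range t, X i ω) = z ∧ ∀ s ≤ t, (∑ i ∈ Finset.range s, X i ω) ≠ x} := by
    intro t z
    rw [hEv t z]
    have mPhi : Measurable (fun ω (i : Fin t) => X i ω) :=
      measurable_pi_lambda _ fun i => hmeas i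
    exact mPhi (measurableSet_A t z x)
  -- key product identity
  have hprod : ∀ (t : ℕ) (z c : ℤ),
      volume ({ω | (∑ i ∈ Finset.range t, X i ω) = z ∧
          ∀ s ≤ t, (∑ i ∈ Finset.range s, X i ω) ≠ x} ∩ {ω | X t ω = c})
      = volume {ω | (∑ i ∈ Finset.range t, X i ω) = z ∧
          ∀ s ≤ t, (∑ i ∈ Finset.range s, X i ω) ≠ x} * volume {ω | X t ω = c} := by
    intro t z c
    rw [hEv t z]
    have h := (indepPhi t).measure_inter_preimage_eq_mul _ _
      (measurableSet_A t z x) (measurableSet_singleton c)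
    exact h
  intro t
  induction t with
  | zero =>
    intro y
    by_cases hy : y = 0
    · subst hy
      have : {ω : Ω | (∑ i ∈ Finset.range 0, X i ω) = 0 ∧
          ∀ s ≤ 0, (∑ i ∈ Finset.range s, X i ω) ≠ x} = Set.univ := by
        ext ω
        simp only [Set.mem_setOf_eq, Set.mem_univ, iff_true]
        refine ⟨by simp, fun s hs => ?_⟩
        interval_cases s
        simp only [Finset.range_zero, Finset.sum_empty]
        omega
      rw [this, measure_univ]
      simp [cnt]
    · have : {ω : Ω | (∑ i ∈ Finset.range 0, X i ω) = y ∧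
          ∀ s ≤ 0, (∑ i ∈ Finset.range s, X i ω) ≠ x} = ∅ := by
        ext ω
        simp only [Finset.range_zero, Finset.sum_empty, Set.mem_setOf_eq, Set.mem_empty_iff_false,
          iff_false, not_and]
        intro h
        exact absurd h.symm hy
      rw [this, measure_empty]
      simp [cnt, hy]
  | succ t ih =>
    intro y
    by_cases hy : y = x
    · rw [hy]
      have : {ω : Ω | (∑ i ∈ Finset.range (t+1), X i ω) = x ∧
          ∀ s ≤ t+1, (∑ i ∈ Finset.range s, X i ω) ≠ x} = ∅ := by
        ext ω
        simp only [Set.mem_setOf_eq, Set.mem_empty_iff_false, iff_false, not_and]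
        intro h hall
        exact hall (t+1) le_rfl h
      rw [this, measure_empty, cnt, if_pos rfl]
      simp
    · -- null set where X t is not ±1
      have hnull : volume {ω | X t ω ≠ 1 ∧ X t ω ≠ -1} = 0 := by
        have hdisj : Disjoint {ω | X t ω = 1} {ω | X t ω = -1} := by
          rw [Set.disjoint_left]
          intro ω h1 h2
          simp only [Set.mem_setOf_eq] at h1 h2
          omega
        have hm1 : MeasurableSet {ω | X t ω = -1} := hmeas t (measurableSet_singleton (-1))
        have hu : volume ({ω | X t ω = 1} ∪ {ω | X t ω = -1}) = 1 := by
          rw [measure_union hdisj hm1, hup t, hdown t]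
          rw [ENNReal.div_add_div_same]
          have h11 : (1+1 : ℝ≥0∞) = 2 := by norm_num
          rw [h11]
          exact ENNReal.div_self two_ne_zero ENNReal.ofNat_ne_top
        have hcompl : {ω | X t ω ≠ 1 ∧ X t ω ≠ -1}
            = ({ω | X t ω = 1} ∪ {ω | X t ω = -1})ᶜ := by
          ext ω
          simp [not_or]
        have hm1p : MeasurableSet {ω | X t ω = 1} := hmeas t (measurableSet_singleton 1)
        rw [hcompl, measure_compl (hm1p.union hm1) (measure_ne_top _ _), hu, measure_univ]
        simp
      set E1 : Set Ω := {ω | (∑ i ∈ Finset.range t, X i ω) = y - 1 ∧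
          ∀ s ≤ t, (∑ i ∈ Finset.range s, X i ω) ≠ x} with hE1
      set E2 : Set Ω := {ω | (∑ i ∈ Finset.range t, X i ω) = y + 1 ∧
          ∀ s ≤ t, (∑ i ∈ Finset.range s, X i ω) ≠ x} with hE2
      set A : Set Ω := E1 ∩ {ω | X t ω = 1} with hA
      set Bs : Set Ω := E2 ∩ {ω | X t ω = -1} with hBs
      set E : Set Ω := {ω : Ω | (∑ i ∈ Finset.range (t+1), X i ω) = y ∧
          ∀ s ≤ t+1, (∑ i ∈ Finset.range s, X i ω) ≠ x} with hE
      have hsub2 : A ∪ Bs ⊆ E := by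
        rintro ω (⟨⟨hsum, hav⟩, hX⟩ | ⟨⟨hsum, hav⟩, hX⟩) <;>
        · simp only [Set.mem_setOf_eq] at hX ⊢
          have hss : (∑ i ∈ Finset.range (t+1), X i ω)
              = (∑ i ∈ Finset.range t, X i ω) + X t ω := Finset.sum_range_succ _ _
          constructor
          · rw [hss, hsum, hX]; ring
          · intro s hs
            rcases (by omega : s ≤ t ∨ s = t + 1) with h | h
            · exact hav s h
            · subst h
              rw [hss, hsum, hX]
              intro hcon
              apply hy
              omega
      have hsub1 : E ⊆ (A ∪ Bs) ∪ {ω | X t ω ≠ 1 ∧ X t ω ≠ -1} := by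
        intro ω ⟨hsum, hav⟩
        by_cases h1 : X t ω = 1
        · left; left
          have hss : (∑ i ∈ Finset.range (t+1), X i ω)
              = (∑ i ∈ Finset.range t, X i ω) + X t ω := Finset.sum_range_succ _ _
          refine ⟨⟨?_, fun s hs => hav s (by omega)⟩, h1⟩
          rw [hss, h1] at hsum
          omega
        · by_cases h2 : X t ω = -1
          · left; right
            have hss : (∑ i ∈ Finset.range (t+1), X i ω)
                = (∑ i ∈ Finset.range t, X i ω) + X t ω := Finset.sum_range_succ _ _
            refine ⟨⟨?_, fun s hs => hav s (by omega)⟩, h2⟩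
            rw [hss, h2] at hsum
            omega
          · right; exact ⟨h1, h2⟩
      have hAB : Disjoint A Bs := by
        rw [Set.disjoint_left]
        rintro ω ⟨-, h1⟩ ⟨-, h2⟩
        simp only [Set.mem_setOf_eq] at h1 h2
        omega
      have hBsm : MeasurableSet Bs :=
        (mE t (y+1)).inter (hmeas t (measurableSet_singleton (-1)))
      have hEle : volume E ≤ volume A + volume Bs := by
        calc volume E ≤ volume ((A ∪ Bs) ∪ {ω | X t ω ≠ 1 ∧ X t ω ≠ -1}) := measure_mono hsub1
          _ ≤ volume (A ∪ Bs) + volume {ω | X t ω ≠ 1 ∧ X t ω ≠ -1} := measure_union_le _ _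
          _ = volume (A ∪ Bs) := by rw [hnull, add_zero]
          _ = volume A + volume Bs := measure_union hAB hBsm
      have hEge : volume A + volume Bs ≤ volume E := by
        calc volume A + volume Bs = volume (A ∪ Bs) := (measure_union hAB hBsm).symm
          _ ≤ volume E := measure_mono hsub2
      have hEeq : volume E = volume A + volume Bs := le_antisymm hEle hEge
      have hA12 : volume A = volume E1 * (1/2 : ℝ≥0∞) := by
        rw [hA, hE1]
        rw [hprod t (y-1) 1, hup t]
      have hB12 : volume Bs = volume E2 * (1/2 : ℝ≥0∞) := by
        rw [hBs, hE2]
        rw [hprod t (y+1) (-1), hdown t]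
      rw [hEeq, hA12, hB12, ih (y-1), ih (y+1)]
      rw [cnt, if_neg hy]
      push_cast
      rw [pow_succ]
      have h12 : (1/2 : ℝ≥0∞) = (2:ℝ≥0∞)⁻¹ := by rw [one_div]
      rw [h12]
      ring

end SRW

open MeasureTheory ProbabilityTheory



/-- For a simple symmetric random walk on ℤ started at 0 and a positive integer `x`,
the expected number of visits to `x - 1` strictly before the first visit to `x` is 2. -/
theorem expected_visits_before_hitting
    {Ω : Type*} [MeasureSpace Ω]
    [IsProbabilityMeasure (volume : Measure Ω)]
    (X : ℕ → Ω → ℤ)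
    (hmeas : ∀ n, Measurable (X n))
    (hindep : iIndepFun X volume)
    (hup : ∀ n, volume {ω | X n ω = 1} = 1 / 2)
    (hdown : ∀ n, volume {ω | X n ω = -1} = 1 / 2)
    (x : ℤ) (hx : 0 < x) :
    ∑' t : ℕ, (volume {ω | (∑ i ∈ Finset.range t, X i ω) = x - 1 ∧
      ∀ s ≤ t, (∑ i ∈ Finset.range s, X i ω) ≠ x}).toReal = 2 := by
  have hmeasE := SRW.meas_E X hmeas hindep hup hdown hx
  have hto : ∀ t : ℕ, (volume {ω | (∑ i ∈ Finset.range t, X i ω) = x - 1 ∧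
      ∀ s ≤ t, (∑ i ∈ Finset.range s, X i ω) ≠ x}).toReal
      = (SRW.cnt x t (x-1) : ℝ)/2^t := by
    intro t
    rw [hmeasE t (x-1)]
    rw [ENNReal.toReal_mul, ENNReal.toReal_pow, ENNReal.toReal_inv]
    simp [div_eq_mul_inv, inv_pow]
  rw [tsum_congr hto]
  exact (SRW.main_hasSum hx).tsum_eq
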